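/- Let U⊆V be finite and suppose u and v are both solutions on Ū×[0,T) (with u(x,·),v(x,·)∈C¹ for x∈U) of the Dirichlet problem u_t = Δ_p|_U u + σ(x,t)f(u) in U×(0,T), u=0 on ∂U×[0,T), u(·,0)=u0 on U. Then u ≡ v on Ū×[0,T). -/

import Mathlib

open scoped ENNReal
open Classical Filter Set
open scoped Topology NNReal

/-- The weighted degree `μ(x) = ∑_{y ∼ x} ω(x,y)` of a vertex of a locally finite
weighted graph (non-neighbours contribute `ω(x,y) = 0`). -/
noncomputable def graphMu {V : Type*} (ω : V → V → ℝ) (x : V) : ℝ := ∑' y, ω x y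

/-- The graph `p`-Laplacian
`Δ_p f(x) = (1/μ(x)) ∑_{y ∼ x} ω(x,y) |f(y) - f(x)|^{p-2} (f(y) - f(x))`. -/
noncomputable def pLap {V : Type*} (ω : V → V → ℝ) (p : ℝ) (f : V → ℝ) (x : V) : ℝ :=
  (graphMu ω x)⁻¹ * ∑' y, ω x y * |f y - f x| ^ (p - 2) * (f y - f x)

/-- The (outer vertex) boundary of `U`: vertices outside `U` adjacent to some vertex of `U`. -/
def bdry {V : Type*} (ω : V → V → ℝ) (U : Set V) : Set V :=
  {x | x ∉ U ∧ ∃ y ∈ U, 0 < ω x y}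

/-- `Ū = U ∪ ∂U`. -/
def vclosure {V : Type*} (ω : V → V → ℝ) (U : Set V) : Set V := U ∪ bdry ω U

/-- The time interval `[0,T)` for an extended-real time horizon `T ∈ (0,∞]`. -/
def ITv (T : ℝ≥0∞) : Set ℝ := {t : ℝ | 0 ≤ t ∧ ENNReal.ofReal t < T}

/-- A solution on `Ū × [0,T)` of the Dirichlet problem
`u_t = Δ_p|_U u + σ(x,t) f(u)` in `U × (0,T)`, `u = 0` on `∂U × [0,T)`, `u(·,0) = u0` on `U`.
(For `x ∈ U` all neighbours of `x` lie in `Ū`, so `Δ_p` coincides with `Δ_p|_U` there.) -/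
def IsDirichletSol {V : Type*} (ω : V → V → ℝ) (p : ℝ) (σ : V → ℝ → ℝ) (f : ℝ → ℝ)
    (u0 : V → ℝ) (U : Set V) (T : ℝ≥0∞) (u : V → ℝ → ℝ) : Prop :=
  (∀ x ∈ U, ContDiffOn ℝ 1 (u x) (ITv T)) ∧
  (∀ x ∈ U, ∀ t ∈ ITv T, 0 < t →
    derivWithin (u x) (ITv T) t = pLap ω p (fun y => u y t) x + σ x t * f (u x t)) ∧
  (∀ x ∈ bdry ω U, ∀ t ∈ ITv T, u x t = 0) ∧
  (∀ x ∈ U, u x 0 = u0 x)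


section AuxiliaryLemmas


lemma phi_hasDerivAt {p : ℝ} (hp : 2 < p) (s : ℝ) :
    HasDerivAt (fun z : ℝ => |z| ^ (p - 2) * z) ((p - 1) * |s| ^ (p - 2)) s := by
  have hp2 : (0:ℝ) < p - 2 := by linarith
  rcases eq_or_ne s 0 with rfl | hs
  · have h0 : |(0:ℝ)| ^ (p - 2) = 0 := by
      rw [abs_zero, Real.zero_rpow hp2.ne']
    rw [h0, mul_zero, hasDerivAt_iff_tendsto_slope]
    have hcont : ContinuousAt (fun z : ℝ => |z| ^ (p - 2)) 0 :=
      (continuous_abs.continuousAt).rpow_const (Or.inr hp2.le)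
    have htend : Tendsto (fun z : ℝ => |z| ^ (p - 2)) (𝓝[≠] (0:ℝ)) (𝓝 0) := by
      have := hcont.tendsto
      rw [h0] at this
      exact this.mono_left nhdsWithin_le_nhds
    refine htend.congr' ?_
    filter_upwards [self_mem_nhdsWithin] with z hz
    have hz' : z ≠ 0 := hz
    rw [slope_def_field]
    field_simp
    simp
  · have habs0 : |s| ≠ 0 := abs_ne_zero.2 hs
    have h1 : HasDerivAt (fun z : ℝ => |z| ^ (p - 2))
        ((p - 2) * |s| ^ (p - 2 - 1) * (SignType.sign s : ℝ)) s :=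
      (Real.hasDerivAt_rpow_const (x := |s|) (p := p - 2) (Or.inl habs0)).comp s
        (hasDerivAt_abs hs)
    have h2 := h1.mul (hasDerivAt_id s)
    refine h2.congr_deriv (Eq.symm ?_)
    have hsa : (SignType.sign s : ℝ) * s = |s| := sign_mul_self s
    have hpow : |s| ^ (p - 2 - 1) * |s| = |s| ^ (p - 2) := by
      rw [← Real.rpow_add_one habs0]
      norm_num
    rw [id_eq, mul_one]
    calc (p - 1) * |s| ^ (p - 2)
        = (p - 2) * (|s| ^ (p - 2 - 1) * |s|) + |s| ^ (p - 2) := by rw [hpow]; ring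
      _ = (p - 2) * |s| ^ (p - 2 - 1) * (SignType.sign s : ℝ) * s + |s| ^ (p - 2) := by
          rw [mul_assoc ((p - 2) * |s| ^ (p - 2 - 1)), hsa, mul_assoc]

lemma phi_lip {p : ℝ} (hp : 2 < p) {M a b : ℝ} (ha : |a| ≤ M) (hb : |b| ≤ M) :
    |(|a| ^ (p - 2) * a) - (|b| ^ (p - 2) * b)| ≤ (p - 1) * M ^ (p - 2) * |a - b| := by
  have hM : 0 ≤ M := le_trans (abs_nonneg a) ha
  have key := Convex.norm_image_sub_le_of_norm_hasDerivWithin_le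
    (f := fun z : ℝ => |z| ^ (p - 2) * z) (f' := fun z : ℝ => (p - 1) * |z| ^ (p - 2))
    (s := Icc (-M) M) (C := (p - 1) * M ^ (p - 2))
    (fun z _ => (phi_hasDerivAt hp z).hasDerivWithinAt)
    (fun z hz => by
      have hzM : |z| ≤ M := abs_le.2 ⟨hz.1, hz.2⟩
      have h1 : (0:ℝ) ≤ (p - 1) * |z| ^ (p - 2) :=
        mul_nonneg (by linarith) (Real.rpow_nonneg (abs_nonneg z) _)
      rw [Real.norm_eq_abs, abs_of_nonneg h1]
      have := Real.rpow_le_rpow (abs_nonneg z) hzM (by linarith : (0:ℝ) ≤ p - 2)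
      nlinarith)
    (convex_Icc _ _) (abs_le.1 hb) (abs_le.1 ha)
  simpa [Real.norm_eq_abs] using key

lemma locallyLipschitz_lipschitzOn {f : ℝ → ℝ} (hf : LocallyLipschitz f) {s : Set ℝ}
    (hs : IsCompact s) : ∃ L : ℝ, 0 ≤ L ∧ ∀ a ∈ s, ∀ b ∈ s, |f a - f b| ≤ L * |a - b| := by
  have H : ∀ z : ℝ, ∃ K : ℝ≥0, ∃ ε : ℝ, 0 < ε ∧ LipschitzOnWith K f (Metric.ball z ε) := by
    intro z
    obtain ⟨K, t, ht, hK⟩ := hf z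
    obtain ⟨ε, hε, hball⟩ := Metric.mem_nhds_iff.1 ht
    exact ⟨K, ε, hε, hK.mono hball⟩
  choose K ε hε hlip using H
  obtain ⟨F, -, hF⟩ := hs.elim_nhds_subcover (fun z => Metric.ball z (ε z))
    (fun z _ => Metric.ball_mem_nhds z (hε z))
  obtain ⟨δ, hδ, hleb⟩ := lebesgue_number_lemma_of_metric (ι := {z // z ∈ F})
    (c := fun i => Metric.ball i.1 (ε i.1)) hs (fun i => Metric.isOpen_ball)
    (by
      intro x hx
      rcases Set.mem_iUnion₂.1 (hF hx) with ⟨z, hz, hm⟩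
      exact Set.mem_iUnion.2 ⟨⟨z, hz⟩, hm⟩)
  obtain ⟨M, hM⟩ := hs.exists_bound_of_continuousOn (hf.continuous.continuousOn)
  set M' : ℝ := max M 0 with hM'def
  have hM'0 : 0 ≤ M' := le_max_right _ _
  set L : ℝ := max ((F.sup K : ℝ≥0) : ℝ) (2 * M' / δ) with hLdef
  have hL0 : 0 ≤ L := le_trans (NNReal.coe_nonneg _) (le_max_left _ _)
  refine ⟨L, hL0, fun a ha b hb => ?_⟩
  rcases lt_or_ge (dist a b) δ with hd | hd
  · obtain ⟨i, hi⟩ := hleb a ha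
    have hai : a ∈ Metric.ball i.1 (ε i.1) := hi (Metric.mem_ball_self hδ)
    have hbi : b ∈ Metric.ball i.1 (ε i.1) := hi (by rwa [Metric.mem_ball, dist_comm])
    have := (hlip i.1).dist_le_mul a hai b hbi
    rw [Real.dist_eq, Real.dist_eq] at this
    refine this.trans ?_
    have hK' : ((K i.1 : ℝ)) ≤ ((F.sup K : ℝ≥0) : ℝ) := by
      exact_mod_cast NNReal.coe_le_coe.2 (Finset.le_sup i.2)
    have : ((K i.1 : ℝ)) ≤ L := hK'.trans (le_max_left _ _)
    exact mul_le_mul_of_nonneg_right this (abs_nonneg _)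
  · have hfa : |f a| ≤ M' := le_trans (by simpa using hM a ha) (le_max_left _ _)
    have hfb : |f b| ≤ M' := le_trans (by simpa using hM b hb) (le_max_left _ _)
    have h1 : |f a - f b| ≤ 2 * M' := by
      calc |f a - f b| ≤ |f a| + |f b| := abs_sub _ _
        _ ≤ 2 * M' := by linarith
    have h2 : 2 * M' = (2 * M' / δ) * δ := by field_simp
    have h3 : (2 * M' / δ) * δ ≤ (2 * M' / δ) * |a - b| := by
      apply mul_le_mul_of_nonneg_left _ (by positivity)
      rwa [← Real.dist_eq]
    have h4 : (2 * M' / δ) ≤ L := le_max_right _ _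
    calc |f a - f b| ≤ (2 * M' / δ) * |a - b| := by linarith
      _ ≤ L * |a - b| := mul_le_mul_of_nonneg_right h4 (abs_nonneg _)

lemma pLap_diff_bound {V : Type*} (ω : V → V → ℝ) (hnonneg : ∀ x y, 0 ≤ ω x y)
    (hlf : ∀ x, (Function.support (ω x)).Finite)
    {p : ℝ} (hp : 2 < p) (g h : V → ℝ) (x : V) {R D : ℝ} (hD : 0 ≤ D)
    (hgR : ∀ y, ω x y ≠ 0 → |g y| ≤ R) (hhR : ∀ y, ω x y ≠ 0 → |h y| ≤ R)
    (hgx : |g x| ≤ R) (hhx : |h x| ≤ R)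
    (hgh : ∀ y, ω x y ≠ 0 → |g y - h y| ≤ D) (hghx : |g x - h x| ≤ D) :
    |pLap ω p g x - pLap ω p h x| ≤ (p - 1) * (2 * R) ^ (p - 2) * (2 * D) := by
  classical
  have hR : 0 ≤ R := le_trans (abs_nonneg _) hgx
  set S : Finset V := (hlf x).toFinset with hSdef
  have hmemS : ∀ y, y ∈ S ↔ ω x y ≠ 0 := by
    intro y; simp [hSdef, Function.mem_support]
  set C : ℝ := (p - 1) * (2 * R) ^ (p - 2) with hCdef
  have hC0 : 0 ≤ C := mul_nonneg (by linarith) (Real.rpow_nonneg (by linarith) _)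
  -- the tsums are finite sums over S
  have hsum : ∀ w : V → ℝ,
      (∑' y, ω x y * |w y - w x| ^ (p - 2) * (w y - w x)) =
        ∑ y ∈ S, ω x y * |w y - w x| ^ (p - 2) * (w y - w x) := by
    intro w
    refine tsum_eq_sum ?_
    intro b hb
    have : ω x b = 0 := by
      by_contra hne
      exact hb ((hmemS b).2 hne)
    simp [this]
  have hmu : graphMu ω x = ∑ y ∈ S, ω x y := by
    refine tsum_eq_sum ?_
    intro b hb
    by_contra hne
    exact hb ((hmemS b).2 hne)
  have hmu0 : 0 ≤ graphMu ω x := by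
    rw [hmu]; exact Finset.sum_nonneg fun y _ => hnonneg x y
  -- pointwise estimate
  have hterm : ∀ y ∈ S,
      |ω x y * |g y - g x| ^ (p - 2) * (g y - g x) -
        ω x y * |h y - h x| ^ (p - 2) * (h y - h x)| ≤ ω x y * (C * (2 * D)) := by
    intro y hy
    have hyne : ω x y ≠ 0 := (hmemS y).1 hy
    have h2R : |g y - g x| ≤ 2 * R := by
      calc |g y - g x| ≤ |g y| + |g x| := abs_sub _ _
        _ ≤ 2 * R := by have := hgR y hyne; linarith
    have h2R' : |h y - h x| ≤ 2 * R := by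
      calc |h y - h x| ≤ |h y| + |h x| := abs_sub _ _
        _ ≤ 2 * R := by have := hhR y hyne; linarith
    have hd : |(g y - g x) - (h y - h x)| ≤ 2 * D := by
      calc |(g y - g x) - (h y - h x)| = |(g y - h y) - (g x - h x)| := by ring_nf
        _ ≤ |g y - h y| + |g x - h x| := abs_sub _ _
        _ ≤ 2 * D := by have := hgh y hyne; linarith
    have key := phi_lip hp (M := 2 * R) h2R h2R'
    have key2 : |(|g y - g x| ^ (p - 2) * (g y - g x)) -
        (|h y - h x| ^ (p - 2) * (h y - h x))| ≤ C * (2 * D) := by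
      refine key.trans ?_
      exact mul_le_mul_of_nonneg_left hd hC0
    calc |ω x y * |g y - g x| ^ (p - 2) * (g y - g x) -
          ω x y * |h y - h x| ^ (p - 2) * (h y - h x)|
        = ω x y * |(|g y - g x| ^ (p - 2) * (g y - g x)) -
            (|h y - h x| ^ (p - 2) * (h y - h x))| := by
          rw [mul_assoc, mul_assoc, ← mul_sub, abs_mul, abs_of_nonneg (hnonneg x y)]
      _ ≤ ω x y * (C * (2 * D)) := mul_le_mul_of_nonneg_left key2 (hnonneg x y)
  -- assemble
  have hdiff : pLap ω p g x - pLap ω p h x =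
      (graphMu ω x)⁻¹ * ∑ y ∈ S, (ω x y * |g y - g x| ^ (p - 2) * (g y - g x) -
        ω x y * |h y - h x| ^ (p - 2) * (h y - h x)) := by
    rw [pLap, pLap, hsum g, hsum h, ← mul_sub, Finset.sum_sub_distrib]
  rw [hdiff, abs_mul, abs_of_nonneg (inv_nonneg.2 hmu0)]
  have hsumabs : |∑ y ∈ S, (ω x y * |g y - g x| ^ (p - 2) * (g y - g x) -
      ω x y * |h y - h x| ^ (p - 2) * (h y - h x))| ≤ graphMu ω x * (C * (2 * D)) := by
    calc |∑ y ∈ S, (ω x y * |g y - g x| ^ (p - 2) * (g y - g x) -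
        ω x y * |h y - h x| ^ (p - 2) * (h y - h x))|
        ≤ ∑ y ∈ S, |ω x y * |g y - g x| ^ (p - 2) * (g y - g x) -
            ω x y * |h y - h x| ^ (p - 2) * (h y - h x)| := Finset.abs_sum_le_sum_abs _ _
      _ ≤ ∑ y ∈ S, ω x y * (C * (2 * D)) := Finset.sum_le_sum hterm
      _ = graphMu ω x * (C * (2 * D)) := by rw [← Finset.sum_mul, ← hmu]
  calc (graphMu ω x)⁻¹ * |∑ y ∈ S, (ω x y * |g y - g x| ^ (p - 2) * (g y - g x) -
        ω x y * |h y - h x| ^ (p - 2) * (h y - h x))|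
      ≤ (graphMu ω x)⁻¹ * (graphMu ω x * (C * (2 * D))) :=
        mul_le_mul_of_nonneg_left hsumabs (inv_nonneg.2 hmu0)
    _ = ((graphMu ω x)⁻¹ * graphMu ω x) * (C * (2 * D)) := by ring
    _ ≤ 1 * (C * (2 * D)) := by
        have hmul : (graphMu ω x)⁻¹ * graphMu ω x ≤ 1 := by
          rcases eq_or_lt_of_le hmu0 with h0 | h0
          · rw [← h0]; norm_num
          · rw [inv_mul_cancel₀ h0.ne']
        have hK : (0:ℝ) ≤ C * (2 * D) := mul_nonneg hC0 (by linarith)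
        exact mul_le_mul_of_nonneg_right hmul hK
    _ = (p - 1) * (2 * R) ^ (p - 2) * (2 * D) := by rw [one_mul, hCdef]

end AuxiliaryLemmas

/-- uniqueness: two solutions on `Ū × [0,T)` of the Dirichlet problem
`u_t = Δ_p|_U u + σ(x,t) f(u)` in `U × (0,T)`, `u = 0` on `∂U × [0,T)`, `u(·,0) = u0`,
coincide on `Ū × [0,T)`. -/
theorem uniqueness_dirichlet
    {V : Type*} (ω : V → V → ℝ)
    (hsymm : ∀ x y, ω x y = ω y x)
    (hnonneg : ∀ x y, 0 ≤ ω x y)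
    (hloop : ∀ x, ω x x = 0)
    (hlf : ∀ x, (Function.support (ω x)).Finite)
    (hconn : ∀ x y, Relation.ReflTransGen (fun a b => 0 < ω a b) x y)
    (p : ℝ) (hp : 2 < p)
    (U : Set V) (hUfin : U.Finite)
    (T : ℝ≥0∞) (hT : 0 < T)
    (σ : V → ℝ → ℝ)
    (hσpos : ∀ x t, 0 ≤ t → 0 < σ x t)
    (hσcont : ∀ x, ContinuousOn (σ x) (Set.Ici 0))
    (f : ℝ → ℝ) (hf : LocallyLipschitz f) (hf0 : f 0 = 0)
    (u0 : V → ℝ) (hu0nn : ∀ x, 0 ≤ u0 x) (hu0bd : ∃ M, ∀ x, u0 x ≤ M)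
    (u v : V → ℝ → ℝ)
    (hu : IsDirichletSol ω p σ f u0 U T u)
    (hv : IsDirichletSol ω p σ f u0 U T v) :
    ∀ x ∈ vclosure ω U, ∀ t ∈ ITv T, u x t = v x t := by
  obtain ⟨hu1, hu2, hu3, hu4⟩ := hu
  obtain ⟨hv1, hv2, hv3, hv4⟩ := hv
  suffices hmain : ∀ t₀ ∈ ITv T, 0 < t₀ → ∀ x ∈ U, u x t₀ = v x t₀ by
    rintro x (hxU | hxB) t ht
    · rcases eq_or_lt_of_le ht.1 with h0 | hpos
      · rw [← h0, hu4 x hxU, hv4 x hxU]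
      · exact hmain t ht hpos x hxU
    · rw [hu3 x hxB t ht, hv3 x hxB t ht]
  intro t₀ ht₀ ht₀pos
  -- the time interval [0, t₀] is inside ITv T
  have hIccsub : Icc (0:ℝ) t₀ ⊆ ITv T := fun t ht =>
    ⟨ht.1, lt_of_le_of_lt (ENNReal.ofReal_le_ofReal ht.2) ht₀.2⟩
  -- a slightly larger interval inside ITv T
  obtain ⟨t₁, ht₁, hIco⟩ : ∃ t₁ : ℝ, t₀ < t₁ ∧ ∀ r ∈ Ico (0:ℝ) t₁, r ∈ ITv T := by
    rcases eq_or_ne T ⊤ with rfl | hTne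
    · exact ⟨t₀ + 1, by linarith, fun r hr => ⟨hr.1, ENNReal.ofReal_lt_top⟩⟩
    · have htR : t₀ < T.toReal := by
        have h := ht₀.2
        rw [← ENNReal.ofReal_toReal hTne] at h
        exact (ENNReal.ofReal_lt_ofReal_iff_of_nonneg ht₀.1).1 h
      refine ⟨(t₀ + T.toReal) / 2, by linarith, fun r hr => ⟨hr.1, ?_⟩⟩
      have hr2 : r < T.toReal := by
        have := hr.2; simp only [mem_Ico] at hr; linarith [hr.2]
      calc ENNReal.ofReal r < ENNReal.ofReal T.toReal :=
            (ENNReal.ofReal_lt_ofReal_iff (by linarith)).2 hr2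
        _ = T := ENNReal.ofReal_toReal hTne
  have hnhds : ∀ t ∈ Icc (0:ℝ) t₀, ITv T ∈ 𝓝[Ici t] t := by
    intro t ht
    refine mem_of_superset (Ico_mem_nhdsGE_of_mem ⟨le_refl t, lt_of_le_of_lt ht.2 ht₁⟩) ?_
    exact fun r hr => hIco r ⟨le_trans ht.1 hr.1, hr.2⟩
  set U' : Finset V := hUfin.toFinset with hU'def
  have hmemU' : ∀ x, x ∈ U' ↔ x ∈ U := fun x => hUfin.mem_toFinset
  -- uniform bound R on |u|, |v| over U × [0, t₀]
  have hCu : ∀ x : V, ∃ C : ℝ, 0 ≤ C ∧ (x ∈ U → ∀ t ∈ Icc (0:ℝ) t₀, |u x t| ≤ C ∧ |v x t| ≤ C) := by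
    intro x
    by_cases hx : x ∈ U
    · have hcu : ContinuousOn (u x) (Icc (0:ℝ) t₀) := (hu1 x hx).continuousOn.mono hIccsub
      have hcv : ContinuousOn (v x) (Icc (0:ℝ) t₀) := (hv1 x hx).continuousOn.mono hIccsub
      obtain ⟨C₁, hC₁⟩ := isCompact_Icc.exists_bound_of_continuousOn hcu
      obtain ⟨C₂, hC₂⟩ := isCompact_Icc.exists_bound_of_continuousOn hcv
      refine ⟨max (max C₁ C₂) 0, le_max_right _ _, fun _ t ht => ⟨?_, ?_⟩⟩
      · exact le_trans (by simpa using hC₁ t ht) (le_trans (le_max_left _ _) (le_max_left _ _))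
      · exact le_trans (by simpa using hC₂ t ht) (le_trans (le_max_right _ _) (le_max_left _ _))
    · exact ⟨0, le_rfl, fun h => absurd h hx⟩
  choose Cu hCu0 hCub using hCu
  set R : ℝ := ∑ x ∈ U', Cu x with hRdef
  have hR0 : 0 ≤ R := Finset.sum_nonneg fun i _ => hCu0 i
  have hRb : ∀ x ∈ U, ∀ t ∈ Icc (0:ℝ) t₀, |u x t| ≤ R ∧ |v x t| ≤ R := by
    intro x hx t ht
    have hxU' : x ∈ U' := (hmemU' x).2 hx
    have h1 := hCub x hx t ht
    have h2 : Cu x ≤ R := Finset.single_le_sum (fun i _ => hCu0 i) hxU'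
    exact ⟨h1.1.trans h2, h1.2.trans h2⟩
  -- uniform bound on σ over U × [0, t₀]
  have hCσ : ∀ x : V, ∃ C : ℝ, 0 ≤ C ∧ (x ∈ U → ∀ t ∈ Icc (0:ℝ) t₀, |σ x t| ≤ C) := by
    intro x
    by_cases hx : x ∈ U
    · have hc : ContinuousOn (σ x) (Icc (0:ℝ) t₀) :=
        (hσcont x).mono (fun t ht => ht.1)
      obtain ⟨C, hC⟩ := isCompact_Icc.exists_bound_of_continuousOn hc
      exact ⟨max C 0, le_max_right _ _,
        fun _ t ht => le_trans (by simpa using hC t ht) (le_max_left _ _)⟩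
    · exact ⟨0, le_rfl, fun h => absurd h hx⟩
  choose Cσ hCσ0 hCσb using hCσ
  set Sb : ℝ := ∑ x ∈ U', Cσ x with hSbdef
  have hSb0 : 0 ≤ Sb := Finset.sum_nonneg fun i _ => hCσ0 i
  have hSbb : ∀ x ∈ U, ∀ t ∈ Icc (0:ℝ) t₀, |σ x t| ≤ Sb := by
    intro x hx t ht
    exact (hCσb x hx t ht).trans (Finset.single_le_sum (fun i _ => hCσ0 i) ((hmemU' x).2 hx))
  -- Lipschitz constant for f on [-R, R]
  obtain ⟨Lf, hLf0, hLf⟩ := locallyLipschitz_lipschitzOn hf (isCompact_Icc (a := -R) (b := R))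
  -- the combined constant
  set C : ℝ := (p - 1) * (2 * R) ^ (p - 2) * 2 + Sb * Lf with hCdef
  have hC0 : 0 ≤ C := by
    have h1 : (0:ℝ) ≤ (p - 1) * (2 * R) ^ (p - 2) :=
      mul_nonneg (by linarith) (Real.rpow_nonneg (by linarith) _)
    have h2 : (0:ℝ) ≤ Sb * Lf := mul_nonneg hSb0 hLf0
    linarith
  -- the energy
  set E : ℝ → ℝ := fun t => ∑ x ∈ U', (u x t - v x t) ^ 2 with hEdef
  have hEnn : ∀ t, 0 ≤ E t := fun t => Finset.sum_nonneg fun i _ => sq_nonneg _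
  have hE0 : E 0 = 0 := by
    apply Finset.sum_eq_zero
    intro x hx
    rw [hu4 x ((hmemU' x).1 hx), hv4 x ((hmemU' x).1 hx), sub_self]
    norm_num
  have hEcont : ContinuousOn E (Icc (0:ℝ) t₀) := by
    apply continuousOn_finset_sum
    intro x hx
    have hx' : x ∈ U := (hmemU' x).1 hx
    exact (((hu1 x hx').continuousOn.mono hIccsub).sub
      ((hv1 x hx').continuousOn.mono hIccsub)).pow 2
  -- pointwise bound |w z t| ≤ √(E t)
  have hw : ∀ z ∈ U, ∀ t' : ℝ, |u z t' - v z t'| ≤ Real.sqrt (E t') := by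
    intro z hz t'
    have hzU' : z ∈ U' := (hmemU' z).2 hz
    have h1 : (u z t' - v z t') ^ 2 ≤ E t' :=
      Finset.single_le_sum (fun i _ => sq_nonneg ((u i t' - v i t'))) hzU'
    calc |u z t' - v z t'| = Real.sqrt ((u z t' - v z t') ^ 2) := (Real.sqrt_sq_eq_abs _).symm
      _ ≤ Real.sqrt (E t') := Real.sqrt_le_sqrt h1
  -- derivatives of u, v within Ici t
  have hDu : ∀ x ∈ U, ∀ t ∈ Icc (0:ℝ) t₀,
      HasDerivWithinAt (u x) (derivWithin (u x) (ITv T) t) (Ici t) t := by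
    intro x hx t ht
    exact (((hu1 x hx).differentiableOn one_ne_zero t (hIccsub ht)).hasDerivWithinAt).mono_of_mem_nhdsWithin
      (hnhds t ht)
  have hDv : ∀ x ∈ U, ∀ t ∈ Icc (0:ℝ) t₀,
      HasDerivWithinAt (v x) (derivWithin (v x) (ITv T) t) (Ici t) t := by
    intro x hx t ht
    exact (((hv1 x hx).differentiableOn one_ne_zero t (hIccsub ht)).hasDerivWithinAt).mono_of_mem_nhdsWithin
      (hnhds t ht)
  -- derivative of E
  set E' : ℝ → ℝ := fun t => ∑ x ∈ U',
    (2:ℝ) * (u x t - v x t) ^ 1 *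
      (derivWithin (u x) (ITv T) t - derivWithin (v x) (ITv T) t) with hE'def
  have hE' : ∀ t ∈ Icc (0:ℝ) t₀, HasDerivWithinAt E (E' t) (Ici t) t := by
    intro t ht
    apply HasDerivWithinAt.fun_sum
    intro x hx
    have hx' : x ∈ U := (hmemU' x).1 hx
    exact ((hDu x hx' t ht).sub (hDv x hx' t ht)).pow 2
  -- the key estimate on the difference of the right-hand sides
  have hkey : ∀ t ∈ Icc (0:ℝ) t₀, 0 < t → ∀ x ∈ U,
      |derivWithin (u x) (ITv T) t - derivWithin (v x) (ITv T) t| ≤ C * Real.sqrt (E t) := by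
    intro t ht htpos x hx
    have htITv : t ∈ ITv T := hIccsub ht
    rw [hu2 x hx t htITv htpos, hv2 x hx t htITv htpos]
    have hbd : ∀ y, ω x y ≠ 0 → y ∈ U ∨ y ∈ bdry ω U := by
      intro y hy
      by_cases hyU : y ∈ U
      · exact Or.inl hyU
      · refine Or.inr ⟨hyU, x, hx, ?_⟩
        have : ω y x ≠ 0 := by rw [hsymm y x]; exact hy
        exact lt_of_le_of_ne (hnonneg y x) (Ne.symm this)
    have hgR : ∀ y, ω x y ≠ 0 → |u y t| ≤ R := by
      intro y hy
      rcases hbd y hy with h | h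
      · exact (hRb y h t ht).1
      · rw [hu3 y h t htITv]; simpa using hR0
    have hhR : ∀ y, ω x y ≠ 0 → |v y t| ≤ R := by
      intro y hy
      rcases hbd y hy with h | h
      · exact (hRb y h t ht).2
      · rw [hv3 y h t htITv]; simpa using hR0
    have hgh : ∀ y, ω x y ≠ 0 → |u y t - v y t| ≤ Real.sqrt (E t) := by
      intro y hy
      rcases hbd y hy with h | h
      · exact hw y h t
      · rw [hu3 y h t htITv, hv3 y h t htITv, sub_self]
        simpa using Real.sqrt_nonneg (E t)
    have h1 := pLap_diff_bound ω hnonneg hlf hp (fun y => u y t) (fun y => v y t) x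
      (Real.sqrt_nonneg (E t)) hgR hhR ((hRb x hx t ht).1) ((hRb x hx t ht).2) hgh (hw x hx t)
    have h2 : |σ x t * (f (u x t) - f (v x t))| ≤ Sb * (Lf * Real.sqrt (E t)) := by
      rw [abs_mul]
      have hfa : |f (u x t) - f (v x t)| ≤ Lf * |u x t - v x t| :=
        hLf (u x t) (Set.mem_Icc.2 (abs_le.1 (hRb x hx t ht).1))
          (v x t) (Set.mem_Icc.2 (abs_le.1 (hRb x hx t ht).2))
      have hfb : Lf * |u x t - v x t| ≤ Lf * Real.sqrt (E t) :=
        mul_le_mul_of_nonneg_left (hw x hx t) hLf0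
      exact mul_le_mul (hSbb x hx t ht) (hfa.trans hfb) (abs_nonneg _) hSb0
    have hsplit : pLap ω p (fun y => u y t) x + σ x t * f (u x t) -
        (pLap ω p (fun y => v y t) x + σ x t * f (v x t)) =
        (pLap ω p (fun y => u y t) x - pLap ω p (fun y => v y t) x) +
          σ x t * (f (u x t) - f (v x t)) := by ring
    rw [hsplit]
    calc |(pLap ω p (fun y => u y t) x - pLap ω p (fun y => v y t) x) +
          σ x t * (f (u x t) - f (v x t))|
        ≤ |pLap ω p (fun y => u y t) x - pLap ω p (fun y => v y t) x| +
            |σ x t * (f (u x t) - f (v x t))| := abs_add_le _ _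
      _ ≤ (p - 1) * (2 * R) ^ (p - 2) * (2 * Real.sqrt (E t)) +
            Sb * (Lf * Real.sqrt (E t)) := add_le_add h1 h2
      _ = C * Real.sqrt (E t) := by rw [hCdef]; ring
  -- Gronwall
  set K : ℝ := (U'.card : ℝ) * (2 * C) with hKdef
  have hK0 : 0 ≤ K := mul_nonneg (Nat.cast_nonneg _) (by linarith)
  have hgron : ∀ s ∈ Ioc (0:ℝ) t₀, E t₀ ≤ E s * Real.exp (K * t₀) := by
    intro s hs
    have hbound : ∀ r ∈ Ico s t₀, ‖E' r‖ ≤ K * ‖E r‖ + 0 := by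
      intro r hr
      have hr' : r ∈ Icc (0:ℝ) t₀ := ⟨le_trans hs.1.le hr.1, hr.2.le⟩
      have hrpos : 0 < r := lt_of_lt_of_le hs.1 hr.1
      have hterm : ∀ x ∈ U', |(2:ℝ) * (u x r - v x r) ^ 1 *
          (derivWithin (u x) (ITv T) r - derivWithin (v x) (ITv T) r)| ≤ 2 * C * E r := by
        intro x hx
        have hx' : x ∈ U := (hmemU' x).1 hx
        have h1 : |u x r - v x r| ≤ Real.sqrt (E r) := hw x hx' r
        have h2 := hkey r hr' hrpos x hx'
        calc |(2:ℝ) * (u x r - v x r) ^ 1 *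
            (derivWithin (u x) (ITv T) r - derivWithin (v x) (ITv T) r)|
            = 2 * |u x r - v x r| *
                |derivWithin (u x) (ITv T) r - derivWithin (v x) (ITv T) r| := by
              rw [pow_one, abs_mul, abs_mul, abs_two]
          _ ≤ 2 * Real.sqrt (E r) * (C * Real.sqrt (E r)) := by
              apply mul_le_mul _ h2 (abs_nonneg _) _
              · exact mul_le_mul_of_nonneg_left h1 (by norm_num)
              · positivity
          _ = 2 * C * (Real.sqrt (E r) * Real.sqrt (E r)) := by ring
          _ = 2 * C * E r := by rw [Real.mul_self_sqrt (hEnn r)]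
      have hsum : |E' r| ≤ K * E r := by
        calc |E' r| ≤ ∑ x ∈ U', |(2:ℝ) * (u x r - v x r) ^ 1 *
              (derivWithin (u x) (ITv T) r - derivWithin (v x) (ITv T) r)| :=
            Finset.abs_sum_le_sum_abs _ _
          _ ≤ ∑ _x ∈ U', 2 * C * E r := Finset.sum_le_sum hterm
          _ = (U'.card : ℝ) * (2 * C * E r) := by
              rw [Finset.sum_const, nsmul_eq_mul]
          _ = K * E r := by rw [hKdef]; ring
      rw [Real.norm_eq_abs, Real.norm_eq_abs, abs_of_nonneg (hEnn r), add_zero]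
      exact hsum
    have hcont' : ContinuousOn E (Icc s t₀) := hEcont.mono (Icc_subset_Icc hs.1.le le_rfl)
    have hder : ∀ r ∈ Ico s t₀, HasDerivWithinAt E (E' r) (Ici r) r := fun r hr =>
      hE' r ⟨le_trans hs.1.le hr.1, hr.2.le⟩
    have hgb := norm_le_gronwallBound_of_norm_deriv_right_le hcont' hder
      (le_refl ‖E s‖) hbound t₀ ⟨hs.2, le_refl t₀⟩
    rw [gronwallBound_ε0] at hgb
    have h1 : E t₀ ≤ ‖E t₀‖ := le_abs_self _
    have h2 : ‖E s‖ = E s := abs_of_nonneg (hEnn s)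
    have h3 : Real.exp (K * (t₀ - s)) ≤ Real.exp (K * t₀) := by
      apply Real.exp_le_exp.2
      have := hs.1.le
      nlinarith
    calc E t₀ ≤ ‖E t₀‖ := h1
      _ ≤ ‖E s‖ * Real.exp (K * (t₀ - s)) := hgb
      _ = E s * Real.exp (K * (t₀ - s)) := by rw [h2]
      _ ≤ E s * Real.exp (K * t₀) := mul_le_mul_of_nonneg_left h3 (hEnn s)
  have htendsto : Tendsto (fun s => E s * Real.exp (K * t₀)) (nhdsWithin (0:ℝ) (Ioi 0)) (nhds 0) := by
    have h0mem : (0:ℝ) ∈ Icc (0:ℝ) t₀ := ⟨le_refl 0, ht₀pos.le⟩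
    have hcw : ContinuousWithinAt E (Icc (0:ℝ) t₀) 0 := hEcont 0 h0mem
    have hle : nhdsWithin (0:ℝ) (Ioi 0) ≤ nhdsWithin (0:ℝ) (Icc (0:ℝ) t₀) :=
      nhdsWithin_le_of_mem (mem_of_superset (Ioc_mem_nhdsGT ht₀pos) Ioc_subset_Icc_self)
    have htmp := (hcw.tendsto.mono_left hle).mul_const (Real.exp (K * t₀))
    rwa [hE0, zero_mul] at htmp
  have hfinal : E t₀ ≤ 0 := by
    refine ge_of_tendsto htendsto ?_
    filter_upwards [Ioc_mem_nhdsGT ht₀pos] with s hs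
    exact hgron s hs
  have hEt0 : E t₀ = 0 := le_antisymm hfinal (hEnn t₀)
  intro x hx
  have hsum0 : ∑ x ∈ U', (u x t₀ - v x t₀) ^ 2 = 0 := hEt0
  have hterm0 : (u x t₀ - v x t₀) ^ 2 = 0 :=
    (Finset.sum_eq_zero_iff_of_nonneg (fun i _ => sq_nonneg _)).1 hsum0 x ((hmemU' x).2 hx)
  have hzero : u x t₀ - v x t₀ = 0 := sq_eq_zero_iff.1 hterm0
  linarith
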